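/- For every positive integer k, the sum over all positive integers n with n ≠ k of 1/(n² − k²) equals 3/(4k²). -/

import Mathlib

open Finset Filter

-- telescoping with shift d
lemma tele (h : ℕ → ℝ) (d : ℕ) (M : ℕ) :
    ∑ n ∈ range M, (h n - h (n + d)) =
      ∑ i ∈ range d, h i - ∑ i ∈ range d, h (M + i) := by
  induction M with
  | zero => simp
  | succ M ih =>
    have key : ∑ i ∈ range d, h (M + 1 + i)
        = ∑ i ∈ range d, h (M + i) + h (M + d) - h M := by
      have h1 : ∑ i ∈ range (d+1), h (M + i)
          = ∑ i ∈ range d, h (M + i + 1) + h M := Finset.sum_range_succ' _ _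
      have h2 : ∑ i ∈ range (d+1), h (M + i)
          = ∑ i ∈ range d, h (M + i) + h (M + d) := Finset.sum_range_succ _ _
      have h3 : ∀ i, M + i + 1 = M + 1 + i := by omega
      simp only [h3] at h1
      linarith
    rw [Finset.sum_range_succ, ih, key]
    ring

-- the central finite sum
lemma sumC (k : ℕ) (hk : 0 < k) :
    ∑ i ∈ range (2 * k), 1 / ((i : ℝ) - k) = -1 / k := by
  induction k with
  | zero => simp at hk
  | succ k ih =>
    rcases Nat.eq_zero_or_pos k with hk0 | hk0
    · subst hk0; norm_num [Finset.sum_range_succ]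
    · have ihk := ih hk0
      have e : 2 * (k + 1) = (2 * k + 1) + 1 := by ring
      rw [e]
      push_cast
      rw [Finset.sum_range_succ' (fun i => 1 / ((i : ℝ) - ((k:ℝ)+1))) (2*k+1),
        Finset.sum_range_succ]
      have hc : (∑ i ∈ range (2*k), 1 / (((i:ℕ) : ℝ) + 1 - ((k:ℝ)+1)))
          = ∑ i ∈ range (2*k), 1 / ((i : ℝ) - k) := by
        apply Finset.sum_congr rfl; intro i _; norm_num
      push_cast at hc ⊢
      rw [hc, ihk]
      have hk' : (k : ℝ) ≠ 0 := Nat.cast_ne_zero.mpr hk0.ne'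
      have hk1 : (k : ℝ) + 1 ≠ 0 := by positivity
      have hk2 : (0:ℝ) - ((k:ℝ) + 1) ≠ 0 := by
        have : (0:ℝ) < (k:ℝ) + 1 := by positivity
        intro h; linarith
      have hk3 : (2*(k:ℝ)+1) - ((k:ℝ)+1) ≠ 0 := by
        intro h
        have : (k:ℝ) = 0 := by linarith
        exact hk' this
      have hk4 : (-1:ℝ) - (k:ℝ) ≠ 0 := by
        have : (0:ℝ) ≤ (k:ℝ) := Nat.cast_nonneg k
        intro h; linarith
      have e1 : 2 * (k:ℝ) + 1 - ((k:ℝ) + 1) = (k:ℝ) := by ring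
      have e2 : (0:ℝ) - ((k:ℝ) + 1) = -((k:ℝ)+1) := by ring
      rw [e1, e2, one_div_neg_eq_neg_one_div]
      field_simp
      ring

theorem quadratic_integer_sum (k : ℕ) (hk : 0 < k) :
    ∑' n : {n : ℕ // 0 < n ∧ n ≠ k}, (1 : ℝ) / ((n : ℝ) ^ 2 - (k : ℝ) ^ 2)
      = 3 / (4 * (k : ℝ) ^ 2) := by
  have hkR : (0:ℝ) < (k:ℝ) := by exact_mod_cast hk
  have hkne : (k:ℝ) ≠ 0 := hkR.ne'
  set f : ℕ → ℝ := fun n => if 0 < n ∧ n ≠ k then 1 / ((n:ℝ)^2 - (k:ℝ)^2) else 0 with hf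
  -- Step 1: rewrite subtype tsum as tsum of f
  have step1 : ∑' n : {n : ℕ // 0 < n ∧ n ≠ k}, (1 : ℝ) / ((n : ℝ) ^ 2 - (k : ℝ) ^ 2)
      = ∑' n : ℕ, f n := by
    calc ∑' n : {n : ℕ // 0 < n ∧ n ≠ k}, (1 : ℝ) / ((n : ℝ) ^ 2 - (k : ℝ) ^ 2)
        = ∑' x : ↑{n : ℕ | 0 < n ∧ n ≠ k}, (1:ℝ) / ((x:ℝ)^2 - (k:ℝ)^2) := rfl
      _ = ∑' n : ℕ, Set.indicator {n : ℕ | 0 < n ∧ n ≠ k}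
            (fun n => (1:ℝ) / ((n:ℝ)^2 - (k:ℝ)^2)) n :=
          tsum_subtype {n : ℕ | 0 < n ∧ n ≠ k} (fun n => (1:ℝ) / ((n:ℝ)^2 - (k:ℝ)^2))
      _ = ∑' n : ℕ, f n := by
          apply tsum_congr
          intro n
          by_cases h : 0 < n ∧ n ≠ k <;> simp [Set.indicator_apply, hf, h]
  -- Step 2: summability of f
  have hfs : Summable f := by
    rw [← summable_nat_add_iff (2*k+1)]
    have hmaj : Summable fun n : ℕ => 1 / ((n:ℝ)+1)^2 := by
      have h0 : Summable fun n : ℕ => 1 / (n:ℝ)^2 :=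
        Real.summable_one_div_nat_pow.mpr (by norm_num)
      have := (summable_nat_add_iff 1).mpr h0
      apply this.congr
      intro n; push_cast; ring
    apply Summable.of_nonneg_of_le _ _ hmaj
    · intro n
      have hcond : 0 < n + (2*k+1) ∧ n + (2*k+1) ≠ k := by omega
      simp only [hf]
      rw [if_pos hcond]
      have : (0:ℝ) < ((n + (2*k+1) : ℕ):ℝ)^2 - (k:ℝ)^2 := by
        push_cast; nlinarith [Nat.cast_nonneg (α := ℝ) n]
      positivity
    · intro n
      have hcond : 0 < n + (2*k+1) ∧ n + (2*k+1) ≠ k := by omega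
      simp only [hf]
      rw [if_pos hcond]
      apply one_div_le_one_div_of_le
      · positivity
      · push_cast; nlinarith [Nat.cast_nonneg (α := ℝ) n]
  -- partial fraction decomposition, pointwise
  set h : ℕ → ℝ := fun m => 1 / ((m:ℝ) - k) with hh
  have hpt : ∀ n : ℕ, f n = 1/(2*(k:ℝ)) * (h n - h (n + 2*k))
      + (if n = 0 then 1/(k:ℝ)^2 else 0) + (if n = k then 1/(4*(k:ℝ)^2) else 0) := by
    intro n
    have hsh : h (n + 2*k) = 1 / ((n:ℝ) + k) := by
      simp only [hh]; push_cast; ring_nf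
    rcases eq_or_ne n 0 with rfl | hn0
    · have h0k : (0:ℕ) ≠ k := by omega
      rw [hsh]
      simp only [hf, hh]
      rw [if_neg (by omega : ¬ ((0:ℕ) < 0 ∧ (0:ℕ) ≠ k)), if_pos trivial, if_neg h0k]
      push_cast
      rw [zero_sub, zero_add, one_div_neg_eq_neg_one_div]
      field_simp
      ring
    · rcases eq_or_ne n k with rfl | hnk
      · rw [hsh]
        simp only [hf, hh]
        rw [if_neg (by simp : ¬ (0 < n ∧ n ≠ n)), if_neg hn0, if_pos trivial,
          sub_self, div_zero]
        have h2 : (n:ℝ) + n ≠ 0 := by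
          have : (0:ℝ) < (n:ℝ) := by exact_mod_cast Nat.pos_of_ne_zero hn0
          positivity
        field_simp
        ring
      · have hcond : 0 < n ∧ n ≠ k := ⟨Nat.pos_of_ne_zero hn0, hnk⟩
        rw [hsh]
        simp only [hf, hh]
        rw [if_pos hcond, if_neg hn0, if_neg hnk]
        have h1 : (n:ℝ) - k ≠ 0 := by
          rw [sub_ne_zero]; exact_mod_cast hnk
        have h2 : (n:ℝ) + k ≠ 0 := by positivity
        have h2' : (k:ℝ) + n ≠ 0 := by positivity
        have h1' : (k:ℝ) - n ≠ 0 := fun hx => h1 (by linarith)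
        have h3 : (n:ℝ)^2 - (k:ℝ)^2 ≠ 0 := by
          rw [show (n:ℝ)^2 - (k:ℝ)^2 = ((n:ℝ) - k) * ((n:ℝ) + k) by ring]
          exact mul_ne_zero h1 h2
        field_simp
        ring
  -- Step 3: partial sums formula for M ≥ k+1
  have hps : ∀ M : ℕ, k + 1 ≤ M → ∑ n ∈ range M, f n
      = 1/(2*(k:ℝ)) * (-1/(k:ℝ) - ∑ i ∈ range (2*k), h (M + i)) + 1/(k:ℝ)^2 + 1/(4*(k:ℝ)^2) := by
    intro M hM
    calc ∑ n ∈ range M, f n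
        = ∑ n ∈ range M, (1/(2*(k:ℝ)) * (h n - h (n + 2*k))
            + (if n = 0 then 1/(k:ℝ)^2 else 0) + (if n = k then 1/(4*(k:ℝ)^2) else 0)) :=
          Finset.sum_congr rfl (fun n _ => hpt n)
      _ = 1/(2*(k:ℝ)) * (∑ n ∈ range M, (h n - h (n + 2*k))) + 1/(k:ℝ)^2 + 1/(4*(k:ℝ)^2) := by
          rw [Finset.sum_add_distrib, Finset.sum_add_distrib, ← Finset.mul_sum]
          congr 1
          · congr 1
            rw [Finset.sum_ite_eq' (range M) 0 (fun _ => 1/(k:ℝ)^2)]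
            simp [Finset.mem_range]; omega
          · rw [Finset.sum_ite_eq' (range M) k (fun _ => 1/(4*(k:ℝ)^2))]
            simp [Finset.mem_range]; omega
      _ = 1/(2*(k:ℝ)) * (-1/(k:ℝ) - ∑ i ∈ range (2*k), h (M + i)) + 1/(k:ℝ)^2 + 1/(4*(k:ℝ)^2) := by
          rw [tele h (2*k) M, sumC k hk]
  -- Step 4: the tail tends to zero
  have htail : Tendsto (fun M : ℕ => ∑ i ∈ range (2*k), h (M + i)) atTop (nhds 0) := by
    have : ∀ i : ℕ, Tendsto (fun M : ℕ => h (M + i)) atTop (nhds 0) := by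
      intro i
      simp only [hh]
      have h1 : Tendsto (fun M : ℕ => ((M + i : ℕ):ℝ) - k) atTop atTop := by
        apply tendsto_atTop_add_const_right
        exact tendsto_natCast_atTop_atTop.comp (tendsto_add_atTop_nat i)
      simpa [one_div, Function.comp_def] using (tendsto_inv_atTop_zero.comp h1)
    have := tendsto_finset_sum (range (2*k)) (fun i _ => this i)
    simpa using this
  -- Step 5: limit of partial sums
  have hlim : Tendsto (fun M : ℕ => ∑ n ∈ range M, f n) atTop (nhds (3 / (4 * (k:ℝ)^2))) := by
    have hform : Tendsto (fun M : ℕ => 1/(2*(k:ℝ)) * (-1/(k:ℝ) - ∑ i ∈ range (2*k), h (M + i))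
        + 1/(k:ℝ)^2 + 1/(4*(k:ℝ)^2)) atTop (nhds (3 / (4 * (k:ℝ)^2))) := by
      have := (((htail.const_sub (-1/(k:ℝ))).const_mul (1/(2*(k:ℝ)))).add_const
        (1/(k:ℝ)^2)).add_const (1/(4*(k:ℝ)^2))
      convert this using 2
      field_simp
      ring
    apply hform.congr'
    filter_upwards [eventually_ge_atTop (k+1)] with M hM
    exact (hps M hM).symm
  rw [step1, (hfs.hasSum_iff_tendsto_nat.mpr hlim).tsum_eq]
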